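/- arXiv:2506.09723 — 4 statements merged into one kernel-verified Lean document; each statement's English description precedes it below -/
import Mathlib

section
/- Let K = {(R_θ, 0) : θ ∈ ℝ} ⊆ G, where R_θ is the rotation matrix (cos θ, sin θ; −sin θ, cos θ), and set x_n = (I, (n, 0)) ∈ G for n ∈ ℕ. Then the conjugates x_n K x_n⁻¹ converge in the Chabauty sense to the closed subgroup V_∞ = {(I, (0, t)) : t ∈ ℝ}. -/
open Filter Topology

noncomputable section

/-- `SL(2,ℝ)`. -/
abbrev SL2 := Matrix.SpecialLinearGroup (Fin 2) ℝ

/-- The topology on `SL(2,ℝ)` induced from the space of `2×2` real matrices. -/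
instance : TopologicalSpace SL2 :=
  TopologicalSpace.induced ((↑) : SL2 → Matrix (Fin 2) (Fin 2) ℝ) inferInstance

/-- The underlying type of the group `G = SL(2,ℝ) ⋉ ℝ²`, with the product topology. -/
abbrev GG := SL2 × (Fin 2 → ℝ)

/-- Multiplication in `G`: `(g,v)(g',v') = (gg', v + g·v')`. -/
def gmul (x y : GG) : GG := (x.1 * y.1, x.2 + (x.1 : Matrix (Fin 2) (Fin 2) ℝ).mulVec y.2)

/-- The identity element of `G`. -/
def gone : GG := (1, 0)

/-- Inversion in `G`. -/
def ginv (x : GG) : GG := (x.1⁻¹, -((x.1⁻¹ : SL2) : Matrix (Fin 2) (Fin 2) ℝ).mulVec x.2)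

/-- The conjugate `x H x⁻¹` of a subset `H ⊆ G` by `x ∈ G`. -/
def conjSet (x : GG) (H : Set GG) : Set GG := (fun h => gmul (gmul x h) (ginv x)) '' H

/-- `H` is a closed subgroup of `G`. -/
def IsClosedSubgroup (H : Set GG) : Prop :=
  IsClosed H ∧ gone ∈ H ∧ (∀ a ∈ H, ∀ b ∈ H, gmul a b ∈ H) ∧ (∀ a ∈ H, ginv a ∈ H)

/-- Chabauty convergence of a sequence of subsets of a topological space:
(i) every point of the limit is a limit of a sequence of points of the `S n`;
(ii) every limit of a subsequence of points of the `S n` lies in the limit set. -/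
def ChabautyTendsto {X : Type*} [TopologicalSpace X] (S : ℕ → Set X) (T : Set X) : Prop :=
  (∀ h ∈ T, ∃ u : ℕ → X, (∀ n, u n ∈ S n) ∧ Tendsto u atTop (𝓝 h)) ∧
  (∀ k : ℕ → ℕ, StrictMono k → ∀ u : ℕ → X, (∀ n, u n ∈ S (k n)) →
    ∀ x : X, Tendsto u atTop (𝓝 x) → x ∈ T)

/-- The Levi subgroup `L = SL(2,ℝ) × {0}`. -/
def Lset : Set GG := {x | x.2 = 0}

/-- The subgroup `N⁺ ⋉ ℝ² = {((1,s;0,1), v) : s ∈ ℝ, v ∈ ℝ²}`. -/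
def NplusR2 : Set GG := {x | ∃ s : ℝ, (x.1 : Matrix (Fin 2) (Fin 2) ℝ) = !![1, s; 0, 1]}

/-- The maximal compact subgroup `K = SO(2,ℝ) × {0}`. -/
def Kset : Set GG :=
  {x | ∃ θ : ℝ, (x.1 : Matrix (Fin 2) (Fin 2) ℝ) =
      !![Real.cos θ, Real.sin θ; -Real.sin θ, Real.cos θ] ∧ x.2 = 0}

/-- `V_c = {(I,(t,ct)) : t ∈ ℝ}`. -/
def Vc (c : ℝ) : Set GG := {x | ∃ t : ℝ, x.1 = 1 ∧ x.2 = ![t, c * t]}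

/-- `V_∞ = {(I,(0,t)) : t ∈ ℝ}`. -/
def Vinf : Set GG := {x | ∃ t : ℝ, x.1 = 1 ∧ x.2 = ![0, t]}

/-- `Ñ⁺ = {(±(1,s;0,1), 0) : s ∈ ℝ}`. -/
def Ntilde : Set GG :=
  {x | (∃ s : ℝ, (x.1 : Matrix (Fin 2) (Fin 2) ℝ) = !![1, s; 0, 1] ∨
      (x.1 : Matrix (Fin 2) (Fin 2) ℝ) = -!![1, s; 0, 1]) ∧ x.2 = 0}

/-- The diagonal subgroup `A = {(diag(a,1/a), 0) : a > 0}`. -/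
def Aset : Set GG :=
  {x | ∃ a : ℝ, 0 < a ∧ (x.1 : Matrix (Fin 2) (Fin 2) ℝ) = !![a, 0; 0, a⁻¹] ∧ x.2 = 0}

/-- `V_{(a,b,c)} = {((1,at;0,1), (ct + abt²/2, bt)) : t ∈ ℝ}`. -/
def Vabc (a b c : ℝ) : Set GG :=
  {x | ∃ t : ℝ, (x.1 : Matrix (Fin 2) (Fin 2) ℝ) = !![1, a * t; 0, 1] ∧
      x.2 = ![c * t + a * b * t ^ 2 / 2, b * t]}

/-- The upper triangular Borel subgroup `B` of `SL(2,ℝ)`, inside `G`. -/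
def Bset : Set GG :=
  {x | ∃ a s : ℝ, a ≠ 0 ∧ (x.1 : Matrix (Fin 2) (Fin 2) ℝ) = !![a, s; 0, a⁻¹] ∧ x.2 = 0}

/-- `W = {((1,s;0,1), (t,0)) : s, t ∈ ℝ} = N⁺ ⋉ {(t,0)}`. -/
def Wset : Set GG :=
  {x | ∃ s t : ℝ, (x.1 : Matrix (Fin 2) (Fin 2) ℝ) = !![1, s; 0, 1] ∧ x.2 = ![t, 0]}

/-- The Borel subgroup `P = B ⋉ ℝ²` of `G`. -/
def Pset : Set GG :=
  {x | ∃ a s : ℝ, a ≠ 0 ∧ (x.1 : Matrix (Fin 2) (Fin 2) ℝ) = !![a, s; 0, a⁻¹]}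

/-- The translation subgroup `ℝ² = {(I,v) : v ∈ ℝ²}`. -/
def R2set : Set GG := {x | x.1 = 1}

/-- The unipotent subgroup `N⁺ = {((1,s;0,1), 0) : s ∈ ℝ}`. -/
def Nplus : Set GG := {x | ∃ s : ℝ, (x.1 : Matrix (Fin 2) (Fin 2) ℝ) = !![1, s; 0, 1] ∧ x.2 = 0}

/-- `V₀ = {(I,(t,0)) : t ∈ ℝ}`. -/
def V0 : Set GG := {x | ∃ t : ℝ, x.1 = 1 ∧ x.2 = ![t, 0]}

def upperUnipotent (s : ℝ) : SL2 :=
  ⟨!![1, s; 0, 1], by simp [Matrix.det_fin_two_of]⟩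


noncomputable def rotSL (θ : ℝ) : SL2 :=
  ⟨!![Real.cos θ, Real.sin θ; -Real.sin θ, Real.cos θ], by
    simp [Matrix.det_fin_two_of]
    nlinarith [Real.sin_sq_add_cos_sq θ]⟩

lemma conj_formula (n : ℕ) (θ : ℝ) :
    gmul (gmul ((1 : SL2), ![(n : ℝ), 0]) (rotSL θ, 0)) (ginv ((1 : SL2), ![(n : ℝ), 0]))
      = (rotSL θ, ![(n : ℝ) * (1 - Real.cos θ), (n : ℝ) * Real.sin θ]) := by
  simp only [gmul, ginv, one_mul, mul_one, inv_one, Matrix.SpecialLinearGroup.coe_one,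
    Matrix.one_mulVec, Matrix.mulVec_zero, add_zero]
  refine Prod.ext rfl ?_
  funext i
  fin_cases i <;>
    simp [rotSL, Matrix.mulVec, dotProduct, Fin.sum_univ_two] <;> ring

lemma mem_S_iff (n : ℕ) (u : GG) :
    u ∈ conjSet ((1 : SL2), ![(n : ℝ), 0]) Kset ↔
      ∃ θ : ℝ, u = (rotSL θ, ![(n : ℝ) * (1 - Real.cos θ), (n : ℝ) * Real.sin θ]) := by
  constructor
  · rintro ⟨h, ⟨θ, hm, hv⟩, rfl⟩
    refine ⟨θ, ?_⟩
    have h1 : h = (rotSL θ, 0) := by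
      refine Prod.ext (Subtype.coe_injective ?_) hv
      simpa [rotSL] using hm
    rw [h1]; exact conj_formula n θ
  · rintro ⟨θ, rfl⟩
    exact ⟨(rotSL θ, 0), ⟨θ, rfl, rfl⟩, conj_formula n θ⟩

lemma inv_nat_tendsto : Tendsto (fun n : ℕ => ((n : ℝ))⁻¹) atTop (𝓝[≠] 0) := by
  rw [tendsto_nhdsWithin_iff]
  constructor
  · simpa using (tendsto_one_div_atTop_nhds_zero_nat : Tendsto (fun n : ℕ => 1 / (n : ℝ)) atTop (𝓝 0))
  · filter_upwards [eventually_ge_atTop 1] with n hn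
    have : (0 : ℝ) < n := by exact_mod_cast hn
    simp [Set.mem_setOf_eq, inv_ne_zero this.ne']

lemma tendsto_n_sin (t : ℝ) :
    Tendsto (fun n : ℕ => (n : ℝ) * Real.sin (t / n)) atTop (𝓝 t) := by
  have hd : HasDerivAt (fun x : ℝ => Real.sin (t * x)) (Real.cos (t * 0) * (t * 1)) 0 :=
    ((hasDerivAt_id 0).const_mul t).sin
  have hs := hasDerivAt_iff_tendsto_slope.mp hd
  have h2 := hs.comp inv_nat_tendsto
  have heq : ∀ᶠ n : ℕ in atTop,
      (slope (fun x : ℝ => Real.sin (t * x)) 0 ∘ fun n : ℕ => ((n : ℝ))⁻¹) n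
        = (n : ℝ) * Real.sin (t / n) := by
    filter_upwards [eventually_ge_atTop 1] with n hn
    have h0 : ((n : ℝ)) ≠ 0 := by positivity
    simp [slope_def_field, div_eq_mul_inv, mul_comm]
  have := h2.congr' heq
  simpa using this

lemma tendsto_n_one_sub_cos (t : ℝ) :
    Tendsto (fun n : ℕ => (n : ℝ) * (1 - Real.cos (t / n))) atTop (𝓝 0) := by
  have hd : HasDerivAt (fun x : ℝ => Real.cos (t * x)) (-Real.sin (t * 0) * (t * 1)) 0 :=
    ((hasDerivAt_id 0).const_mul t).cos
  have hs := hasDerivAt_iff_tendsto_slope.mp hd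
  have h2 := (hs.comp inv_nat_tendsto).neg
  have heq : ∀ᶠ n : ℕ in atTop,
      (-(slope (fun x : ℝ => Real.cos (t * x)) 0 ∘ fun n : ℕ => ((n : ℝ))⁻¹) n)
        = (n : ℝ) * (1 - Real.cos (t / n)) := by
    filter_upwards [eventually_ge_atTop 1] with n hn
    have h0 : ((n : ℝ)) ≠ 0 := by positivity
    simp only [Function.comp_apply, slope_def_field, div_eq_mul_inv, zero_mul, inv_zero,
      sub_zero, Real.cos_zero]
    field_simp
    simp only [mul_zero, Real.cos_zero]
    ring
  have := h2.congr' heq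
  simpa using this

lemma tendsto_SL2_iff {u : ℕ → SL2} {a : SL2} :
    Tendsto u atTop (𝓝 a) ↔
      ∀ i j, Tendsto (fun n => ((u n : Matrix (Fin 2) (Fin 2) ℝ)) i j) atTop
        (𝓝 ((a : Matrix (Fin 2) (Fin 2) ℝ) i j)) := by
  rw [nhds_induced, tendsto_comap_iff]
  constructor
  · intro h i j
    exact (((continuous_apply j).comp (continuous_apply i)).tendsto _).comp h
  · intro h
    refine tendsto_pi_nhds.mpr ?_
    intro i
    rw [tendsto_pi_nhds]
    exact h i

lemma tendsto_GG_iff {u : ℕ → GG} {x : GG} :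
    Tendsto u atTop (𝓝 x) ↔
      (∀ i j, Tendsto (fun n => (((u n).1 : Matrix (Fin 2) (Fin 2) ℝ)) i j) atTop
        (𝓝 ((x.1 : Matrix (Fin 2) (Fin 2) ℝ) i j))) ∧
      ∀ i, Tendsto (fun n => (u n).2 i) atTop (𝓝 (x.2 i)) := by
  rw [nhds_prod_eq, tendsto_prod_iff']
  rw [tendsto_SL2_iff, tendsto_pi_nhds]

lemma Vinf_isClosedSubgroup : IsClosedSubgroup Vinf := by
  refine ⟨?_, ⟨0, rfl, ?_⟩, ?_, ?_⟩
  · have hset : Vinf = (fun x : GG => ((x.1 : Matrix (Fin 2) (Fin 2) ℝ), x.2 0)) ⁻¹'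
        {((1 : Matrix (Fin 2) (Fin 2) ℝ), (0 : ℝ))} := by
      ext x
      constructor
      · rintro ⟨t, h1, h2⟩
        simp [Set.mem_preimage, h1, h2, Matrix.SpecialLinearGroup.coe_one]
      · intro hx
        simp only [Set.mem_preimage, Set.mem_singleton_iff, Prod.mk.injEq] at hx
        refine ⟨x.2 1, Subtype.coe_injective (by
          show (x.1 : Matrix (Fin 2) (Fin 2) ℝ) = ((1 : SL2) : Matrix (Fin 2) (Fin 2) ℝ)
          rw [hx.1, Matrix.SpecialLinearGroup.coe_one]), ?_⟩
        funext i
        fin_cases i <;> simp [hx.2]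
    rw [hset]
    refine IsClosed.preimage ?_ isClosed_singleton
    exact (continuous_induced_dom.comp continuous_fst).prodMk
      ((continuous_apply 0).comp continuous_snd)
  · funext i; fin_cases i <;> simp [gone]
  · rintro a ⟨s, ha1, ha2⟩ b ⟨t, hb1, hb2⟩
    refine ⟨s + t, ?_, ?_⟩
    · simp [gmul, ha1, hb1]
    · simp only [gmul, ha1, ha2, hb1, hb2, Matrix.SpecialLinearGroup.coe_one, Matrix.one_mulVec]
      funext i
      fin_cases i <;> simp
  · rintro a ⟨t, ha1, ha2⟩
    refine ⟨-t, ?_, ?_⟩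
    · simp [ginv, ha1]
    · simp only [ginv, ha1, ha2, inv_one, Matrix.SpecialLinearGroup.coe_one, Matrix.one_mulVec]
      funext i
      fin_cases i <;> simp

/-- With `x_n = (I,(n,0))`, the conjugates `x_n K x_n⁻¹` converge in the Chabauty sense to
the closed subgroup `V_∞`. -/
theorem stmt_14 :
    ChabautyTendsto (fun n => conjSet ((1 : SL2), ![(n : ℝ), 0]) Kset) Vinf ∧
      IsClosedSubgroup Vinf := by
  refine ⟨⟨?_, ?_⟩, Vinf_isClosedSubgroup⟩
  · -- (i)
    rintro h ⟨t, h1, h2⟩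
    refine ⟨fun n => (rotSL (t / n),
        ![(n : ℝ) * (1 - Real.cos (t / n)), (n : ℝ) * Real.sin (t / n)]),
      fun n => (mem_S_iff n _).mpr ⟨t / n, rfl⟩, ?_⟩
    have hx : h = ((1 : SL2), ![0, t]) := Prod.ext h1 h2
    rw [hx, tendsto_GG_iff]
    have ht0 : Tendsto (fun n : ℕ => t / n) atTop (𝓝 0) :=
      tendsto_const_div_atTop_nhds_zero_nat t
    have hcos : Tendsto (fun n : ℕ => Real.cos (t / n)) atTop (𝓝 1) := by
      simpa [Function.comp_def] using (Real.continuous_cos.tendsto 0).comp ht0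
    have hsin : Tendsto (fun n : ℕ => Real.sin (t / n)) atTop (𝓝 0) := by
      simpa [Function.comp_def] using (Real.continuous_sin.tendsto 0).comp ht0
    constructor
    · intro i j
      fin_cases i <;> fin_cases j <;>
        simp only [rotSL, Matrix.SpecialLinearGroup.coe_one, Fin.zero_eta, Fin.mk_one,
          Matrix.cons_val', Matrix.cons_val_zero, Matrix.cons_val_one, Matrix.head_cons,
          Matrix.head_fin_const, Matrix.empty_val', Matrix.cons_val_fin_one, Matrix.one_apply]
      · simpa using hcos
      · simpa using hsin
      · simpa using hsin.neg
      · simpa using hcos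
    · intro i
      fin_cases i
      · simpa using tendsto_n_one_sub_cos t
      · simpa using tendsto_n_sin t
  · -- (ii)
    intro k hk u hu x hx
    choose θ hθ using fun n => (mem_S_iff (k n) (u n)).mp (hu n)
    rw [tendsto_GG_iff] at hx
    obtain ⟨hm, hv⟩ := hx
    have hc00 : ∀ n, ((u n).1 : Matrix (Fin 2) (Fin 2) ℝ) 0 0 = Real.cos (θ n) := fun n => by
      rw [hθ n]; simp [rotSL]
    have hc01 : ∀ n, ((u n).1 : Matrix (Fin 2) (Fin 2) ℝ) 0 1 = Real.sin (θ n) := fun n => by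
      rw [hθ n]; simp [rotSL]
    have hc10 : ∀ n, ((u n).1 : Matrix (Fin 2) (Fin 2) ℝ) 1 0 = -Real.sin (θ n) := fun n => by
      rw [hθ n]; simp [rotSL]
    have hc11 : ∀ n, ((u n).1 : Matrix (Fin 2) (Fin 2) ℝ) 1 1 = Real.cos (θ n) := fun n => by
      rw [hθ n]; simp [rotSL]
    have hw0 : ∀ n, (u n).2 0 = (k n : ℝ) * (1 - Real.cos (θ n)) := fun n => by
      rw [hθ n]; simp
    have hw1 : ∀ n, (u n).2 1 = (k n : ℝ) * Real.sin (θ n) := fun n => by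
      rw [hθ n]; simp
    have HA : Tendsto (fun n => (k n : ℝ) * (1 - Real.cos (θ n))) atTop (𝓝 (x.2 0)) :=
      (hv 0).congr fun n => hw0 n
    have HB : Tendsto (fun n => (k n : ℝ) * Real.sin (θ n)) atTop (𝓝 (x.2 1)) :=
      (hv 1).congr fun n => hw1 n
    have hkpos : ∀ᶠ n : ℕ in atTop, ((k n : ℝ)) ≠ 0 := by
      filter_upwards [eventually_ge_atTop 1] with n hn
      have h1 : 1 ≤ k n := le_trans hn (hk.le_apply)
      positivity
    have hkinv : Tendsto (fun n : ℕ => ((k n : ℝ))⁻¹) atTop (𝓝 0) := by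
      refine Tendsto.comp tendsto_inv_atTop_zero ?_
      exact tendsto_natCast_atTop_atTop.comp hk.tendsto_atTop
    have h1c : Tendsto (fun n => 1 - Real.cos (θ n)) atTop (𝓝 0) := by
      have h := HA.mul hkinv
      rw [mul_zero] at h
      refine h.congr' ?_
      filter_upwards [hkpos] with n hn
      field_simp
    have hcos1 : Tendsto (fun n => Real.cos (θ n)) atTop (𝓝 1) := by
      have h2 := (tendsto_const_nhds (x := (1 : ℝ)) (f := atTop (α := ℕ))).sub h1c
      simpa using h2
    have hsin0 : Tendsto (fun n => Real.sin (θ n)) atTop (𝓝 0) := by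
      have h := HB.mul hkinv
      rw [mul_zero] at h
      refine h.congr' ?_
      filter_upwards [hkpos] with n hn
      field_simp
    have e00 : (x.1 : Matrix (Fin 2) (Fin 2) ℝ) 0 0 = 1 :=
      tendsto_nhds_unique ((hm 0 0).congr fun n => hc00 n) hcos1
    have e01 : (x.1 : Matrix (Fin 2) (Fin 2) ℝ) 0 1 = 0 :=
      tendsto_nhds_unique ((hm 0 1).congr fun n => hc01 n) hsin0
    have e10 : (x.1 : Matrix (Fin 2) (Fin 2) ℝ) 1 0 = 0 :=
      tendsto_nhds_unique ((hm 1 0).congr fun n => hc10 n) (by simpa using hsin0.neg)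
    have e11 : (x.1 : Matrix (Fin 2) (Fin 2) ℝ) 1 1 = 1 :=
      tendsto_nhds_unique ((hm 1 1).congr fun n => hc11 n) hcos1
    have hx1 : x.1 = 1 := by
      refine Subtype.coe_injective ?_
      show (x.1 : Matrix (Fin 2) (Fin 2) ℝ) = ((1 : SL2) : Matrix (Fin 2) (Fin 2) ℝ)
      rw [Matrix.SpecialLinearGroup.coe_one]
      ext i j
      fin_cases i <;> fin_cases j <;>
        simp [e00, e01, e10, e11, Matrix.one_apply]
    have hcpos : ∀ᶠ n : ℕ in atTop, 0 < Real.cos (θ n) := by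
      have : ∀ᶠ y in 𝓝 (1 : ℝ), 0 < y := eventually_gt_nhds (by norm_num)
      exact hcos1.eventually this
    have key : Tendsto (fun n => (k n : ℝ) * Real.sin (θ n) *
        (Real.sin (θ n) / (1 + Real.cos (θ n)))) atTop (𝓝 (x.2 1 * (0 / (1 + 1)))) :=
      HB.mul (hsin0.div (tendsto_const_nhds.add hcos1) (by norm_num))
    have key0 : Tendsto (fun n => (k n : ℝ) * (1 - Real.cos (θ n))) atTop (𝓝 0) := by
      have h := key
      rw [show x.2 1 * ((0 : ℝ) / (1 + 1)) = 0 by norm_num] at h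
      refine h.congr' ?_
      filter_upwards [hcpos] with n hn
      have h1 : 1 + Real.cos (θ n) ≠ 0 := by positivity
      field_simp
      nlinarith [Real.sin_sq_add_cos_sq (θ n)]
    have hx20 : x.2 0 = 0 := tendsto_nhds_unique HA key0
    refine ⟨x.2 1, hx1, ?_⟩
    funext i
    fin_cases i <;> simp [hx20]

end
end

section
/- Let A = {(diag(a, 1/a), 0) : a > 0} ⊆ G and set x_n = (I, (n, 0)) ∈ G for n ∈ ℕ. Then the conjugates x_n A x_n⁻¹ converge in the Chabauty sense to the closed subgroup V₀ = {(I, (t, 0)) : t ∈ ℝ}. -/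
open Filter Topology

noncomputable section

def diagA (a : ℝ) (h : a ≠ 0) : SL2 :=
  ⟨!![a, 0; 0, a⁻¹], by simp [Matrix.det_fin_two_of]; field_simp⟩

lemma conj_diag (a : ℝ) (h : a ≠ 0) (n : ℝ) :
    gmul (gmul ((1:SL2), ![n,0]) (diagA a h, 0)) (ginv ((1:SL2), ![n,0]))
      = (diagA a h, ![n - a*n, 0]) := by
  simp only [gmul, ginv, inv_one, Matrix.SpecialLinearGroup.coe_one, Matrix.one_mulVec,
    one_mul, mul_one, add_zero]
  ext i
  · rfl
  · fin_cases i <;>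
      simp [diagA, Matrix.mulVec, dotProduct, Fin.sum_univ_two] <;> ring

lemma sl2_tendsto_iff {f : ℕ → SL2} {x : SL2} {l : Filter ℕ} :
    Tendsto f l (𝓝 x) ↔
      Tendsto (fun n => (f n : Matrix (Fin 2) (Fin 2) ℝ)) l (𝓝 (x : Matrix (Fin 2) (Fin 2) ℝ)) := by
  rw [nhds_induced, tendsto_comap_iff]; rfl

lemma mat_tendsto_iff {M : ℕ → Matrix (Fin 2) (Fin 2) ℝ} {L : Matrix (Fin 2) (Fin 2) ℝ}
    {l : Filter ℕ} :
    Tendsto M l (𝓝 L) ↔ ∀ i j, Tendsto (fun n => M n i j) l (𝓝 (L i j)) := by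
  constructor
  · intro h i j
    exact ((continuous_apply_apply i j).tendsto L).comp h
  · intro h
    refine tendsto_pi_nhds.mpr ?_
    intro i
    rw [tendsto_pi_nhds]
    exact h i

lemma mem_conj_iff (n : ℝ) (x : GG) :
    x ∈ conjSet ((1:SL2), ![n,0]) Aset ↔
      ∃ a : ℝ, ∃ h : 0 < a, x = (diagA a h.ne', ![n - a*n, 0]) := by
  constructor
  · rintro ⟨h, ⟨a, ha, hmat, hv⟩, rfl⟩
    refine ⟨a, ha, ?_⟩
    have hh : h = (diagA a ha.ne', 0) := by
      apply Prod.ext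
      · exact Subtype.ext hmat
      · exact hv
    rw [hh]; exact conj_diag ..
  · rintro ⟨a, ha, rfl⟩
    exact ⟨(diagA a ha.ne', 0), ⟨a, ha, rfl, rfl⟩, conj_diag ..⟩

lemma V0_closed_subgroup : IsClosedSubgroup V0 := by
  refine ⟨?_, ⟨0, rfl, ?_⟩, ?_, ?_⟩
  · have : V0 = {x : GG | (x.1 : Matrix (Fin 2) (Fin 2) ℝ) = 1 ∧ x.2 1 = 0} := by
      ext x
      constructor
      · rintro ⟨t, h1, h2⟩
        exact ⟨by rw [h1]; rfl, by rw [h2]; rfl⟩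
      · rintro ⟨h1, h2⟩
        refine ⟨x.2 0, Subtype.ext h1, ?_⟩
        funext i
        fin_cases i
        · rfl
        · exact h2
    rw [this]
    have hc1 : Continuous (fun x : GG => (x.1 : Matrix (Fin 2) (Fin 2) ℝ)) :=
      continuous_induced_dom.comp continuous_fst
    have hc2 : Continuous (fun x : GG => x.2 1) := (continuous_apply 1).comp continuous_snd
    exact (isClosed_singleton.preimage hc1).inter (isClosed_singleton.preimage hc2)
  · funext i; fin_cases i <;> rfl
  · rintro a ⟨t, h1, h2⟩ b ⟨s, g1, g2⟩
    refine ⟨t + s, ?_, ?_⟩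
    · simp [gmul, h1, g1]
    · simp only [gmul, h1, h2, g2, Matrix.SpecialLinearGroup.coe_one, Matrix.one_mulVec]
      funext i; fin_cases i <;> simp
  · rintro a ⟨t, h1, h2⟩
    refine ⟨-t, ?_, ?_⟩
    · simp [ginv, h1]
    · simp only [ginv, h1, h2, inv_one, Matrix.SpecialLinearGroup.coe_one, Matrix.one_mulVec]
      funext i; fin_cases i <;> simp

lemma diagA_coe (a : ℝ) (h : a ≠ 0) :
    ((diagA a h : SL2) : Matrix (Fin 2) (Fin 2) ℝ) = !![a, 0; 0, a⁻¹] := rfl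

/-- With `x_n = (I,(n,0))`, the conjugates `x_n A x_n⁻¹` converge in the Chabauty sense to
the closed subgroup `V₀`. -/
theorem stmt_15 :
    ChabautyTendsto (fun n => conjSet ((1 : SL2), ![(n : ℝ), 0]) Aset) V0 ∧
      IsClosedSubgroup V0 := by
  refine ⟨⟨?_, ?_⟩, V0_closed_subgroup⟩
  · -- part (i)
    rintro h ⟨t, h1, h2⟩
    set a : ℕ → ℝ := fun n => if t < n then 1 - t / n else 1 with ha_def
    have hapos : ∀ n, 0 < a n := by
      intro n
      simp only [ha_def]
      split
      · rename_i hlt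
        rcases Nat.eq_zero_or_pos n with rfl | hn
        · norm_num at hlt ⊢
        · have hn' : (0:ℝ) < n := by exact_mod_cast hn
          have : t / n < 1 := (div_lt_one hn').mpr hlt
          linarith
      · norm_num
    have hev : ∀ᶠ n : ℕ in atTop, t < n := by
      obtain ⟨N, hN⟩ := exists_nat_gt t
      filter_upwards [eventually_ge_atTop N] with n hn
      exact lt_of_lt_of_le hN (by exact_mod_cast hn)
    have haev : ∀ᶠ n : ℕ in atTop, a n = 1 - t / n := by
      filter_upwards [hev] with n hn
      simp [ha_def, hn]
    have hA : Tendsto a atTop (𝓝 1) := by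
      have h0 : Tendsto (fun n : ℕ => (1 : ℝ) - t / n) atTop (𝓝 1) := by
        have := tendsto_const_div_atTop_nhds_zero_nat t
        simpa using (tendsto_const_nhds (x := (1:ℝ))).sub this
      refine h0.congr' ?_
      filter_upwards [hev] with n hn
      simp [ha_def, hn]
    refine ⟨fun n => (diagA (a n) (hapos n).ne', ![(n : ℝ) - a n * n, 0]), fun n =>
      (mem_conj_iff n _).mpr ⟨a n, hapos n, rfl⟩, ?_⟩
    rw [show h = ((1:SL2), ![t,0]) from Prod.ext h1 h2]
    refine Tendsto.prodMk_nhds ?_ ?_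
    · rw [sl2_tendsto_iff]
      rw [mat_tendsto_iff]
      intro i j
      simp only [diagA_coe, Matrix.SpecialLinearGroup.coe_one, Matrix.one_fin_two]
      fin_cases i <;> fin_cases j <;> simp
      · exact hA
      · exact (hA.inv₀ one_ne_zero).congr (by simp) |>.mono_right (by simp)
    · refine tendsto_const_nhds.congr' ?_
      filter_upwards [hev, eventually_ge_atTop 1] with n hn hn1
      have hn' : (0:ℝ) < n := by positivity
      have : a n = 1 - t / n := by simp [ha_def, hn]
      rw [this]
      congr 1
      field_simp
      ring
  · -- part (ii)
    intro k hk u hu x hx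
    have hform : ∀ n, ∃ b : ℝ, ∃ hb : 0 < b,
        u n = (diagA b hb.ne', ![(k n : ℝ) - b * k n, 0]) := fun n => (mem_conj_iff _ _).mp (hu n)
    choose b hb hub using hform
    have hfst : Tendsto (fun n => ((u n).1 : Matrix (Fin 2) (Fin 2) ℝ)) atTop
        (𝓝 (x.1 : Matrix (Fin 2) (Fin 2) ℝ)) := by
      rw [← sl2_tendsto_iff]
      exact (continuous_fst.tendsto x).comp hx
    have hsnd : Tendsto (fun n => (u n).2) atTop (𝓝 x.2) :=
      (continuous_snd.tendsto x).comp hx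
    have hc : Tendsto (fun n => (u n).2 0) atTop (𝓝 (x.2 0)) :=
      ((continuous_apply 0).tendsto x.2).comp hsnd
    have hc' : Tendsto (fun n => (k n : ℝ) - b n * k n) atTop (𝓝 (x.2 0)) := by
      refine hc.congr fun n => ?_
      rw [hub n]; simp
    have hkt : Tendsto (fun n => (k n : ℝ)) atTop atTop := by
      refine tendsto_natCast_atTop_atTop.comp ?_
      exact hk.tendsto_atTop
    have hdiv : Tendsto (fun n => ((k n : ℝ) - b n * k n) / k n) atTop (𝓝 0) :=
      hc'.div_atTop hkt
    have hB : Tendsto b atTop (𝓝 1) := by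
      have h1 : Tendsto (fun n => (1:ℝ) - ((k n : ℝ) - b n * k n) / k n) atTop (𝓝 1) := by
        simpa using (tendsto_const_nhds (x := (1:ℝ))).sub hdiv
      refine h1.congr' ?_
      filter_upwards [eventually_ge_atTop 1] with n hn
      have hkn : (0:ℝ) < k n := by
        have : 1 ≤ k n := le_trans hn (hk.le_apply)
        exact_mod_cast this
      field_simp
      ring
    -- entries of x.1
    have hent : ∀ i j, Tendsto (fun n => ((u n).1 : Matrix (Fin 2) (Fin 2) ℝ) i j) atTop
        (𝓝 ((x.1 : Matrix (Fin 2) (Fin 2) ℝ) i j)) := mat_tendsto_iff.mp hfst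
    have e00 : (x.1 : Matrix (Fin 2) (Fin 2) ℝ) 0 0 = 1 := by
      refine tendsto_nhds_unique ((hent 0 0).congr' ?_) hB
      filter_upwards with n; rw [hub n, diagA_coe]; simp
    have e01 : (x.1 : Matrix (Fin 2) (Fin 2) ℝ) 0 1 = 0 := by
      refine tendsto_nhds_unique ((hent 0 1).congr' ?_) tendsto_const_nhds
      filter_upwards with n; rw [hub n, diagA_coe]; simp
    have e10 : (x.1 : Matrix (Fin 2) (Fin 2) ℝ) 1 0 = 0 := by
      refine tendsto_nhds_unique ((hent 1 0).congr' ?_) tendsto_const_nhds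
      filter_upwards with n; rw [hub n, diagA_coe]; simp
    have hBinv : Tendsto (fun n => (b n)⁻¹) atTop (𝓝 (1:ℝ)) := by
      simpa using hB.inv₀ one_ne_zero
    have e11 : (x.1 : Matrix (Fin 2) (Fin 2) ℝ) 1 1 = 1 := by
      have h' : Tendsto (fun n => (b n)⁻¹) atTop (𝓝 ((x.1 : Matrix (Fin 2) (Fin 2) ℝ) 1 1)) := by
        refine (hent 1 1).congr fun n => ?_
        rw [hub n, diagA_coe]; simp
      exact tendsto_nhds_unique h' hBinv
    have hx1 : x.1 = 1 := by
      apply Subtype.ext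
      rw [Matrix.SpecialLinearGroup.coe_one]
      ext i j
      fin_cases i <;> fin_cases j <;>
        simp_all [Matrix.one_fin_two]
    have hx21 : x.2 1 = 0 := by
      have h1 : Tendsto (fun n => (u n).2 1) atTop (𝓝 (x.2 1)) :=
        ((continuous_apply 1).tendsto x.2).comp hsnd
      refine tendsto_nhds_unique (h1.congr' ?_) tendsto_const_nhds
      filter_upwards with n; rw [hub n]; simp
    refine ⟨x.2 0, hx1, ?_⟩
    funext i
    fin_cases i
    · simp
    · simpa using hx21

end
end

section
/- Let A = {(diag(a, 1/a), 0) : a > 0} ⊆ G and set g_n = ((1, n; 0, 1), 0) ∈ G for n ∈ ℕ. Then the conjugates g_n A g_n⁻¹ converge in the Chabauty sense to the closed subgroup N⁺ = {((1, s; 0, 1), 0) : s ∈ ℝ}. -/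
open Filter Topology

noncomputable section

lemma coe_upper (s : ℝ) : (upperUnipotent s : Matrix (Fin 2) (Fin 2) ℝ) = !![1, s; 0, 1] := rfl

lemma coe_upper_inv (s : ℝ) :
    (((upperUnipotent s)⁻¹ : SL2) : Matrix (Fin 2) (Fin 2) ℝ) = !![1, -s; 0, 1] := by
  rw [Matrix.SpecialLinearGroup.coe_inv, coe_upper, Matrix.adjugate_fin_two_of]
  norm_num

lemma conj_eq (c : ℝ) (h1 : SL2) :
    gmul (gmul (upperUnipotent c, 0) (h1, 0)) (ginv (upperUnipotent c, 0)) =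
      (upperUnipotent c * h1 * (upperUnipotent c)⁻¹, 0) := by
  apply Prod.ext <;> · simp [gmul, ginv, Matrix.mulVec_zero]

lemma conj_mat (c a : ℝ) (h1 : SL2)
    (hm : (h1 : Matrix (Fin 2) (Fin 2) ℝ) = !![a, 0; 0, a⁻¹]) :
    ((upperUnipotent c * h1 * (upperUnipotent c)⁻¹ : SL2) : Matrix (Fin 2) (Fin 2) ℝ) =
      !![a, c * (a⁻¹ - a); 0, a⁻¹] := by
  rw [Matrix.SpecialLinearGroup.coe_mul, Matrix.SpecialLinearGroup.coe_mul,
    coe_upper, coe_upper_inv, hm, Matrix.mul_fin_two, Matrix.mul_fin_two]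
  ext i j
  fin_cases i <;> fin_cases j <;> simp <;> ring

lemma mem_conj_iff_s17 (c : ℝ) (x : GG) :
    x ∈ conjSet (upperUnipotent c, 0) Aset ↔
      ∃ a : ℝ, 0 < a ∧ (x.1 : Matrix (Fin 2) (Fin 2) ℝ) = !![a, c * (a⁻¹ - a); 0, a⁻¹] ∧
        x.2 = 0 := by
  constructor
  · rintro ⟨⟨h1, h2⟩, ⟨a, ha, hmat, hv⟩, rfl⟩
    simp only at hv
    subst hv
    beta_reduce
    rw [conj_eq]
    exact ⟨a, ha, conj_mat c a h1 hmat, rfl⟩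
  · rintro ⟨a, ha, hmat, hv⟩
    refine ⟨(⟨!![a, 0; 0, a⁻¹], by rw [Matrix.det_fin_two_of]; simp [ha.ne']⟩, 0),
      ⟨a, ha, rfl, rfl⟩, ?_⟩
    beta_reduce
    refine (conj_eq c _).trans ?_
    apply Prod.ext
    · exact Subtype.ext ((conj_mat c a _ rfl).trans hmat.symm)
    · exact hv.symm

lemma tendsto_coe_iff {u : ℕ → SL2} {x : SL2} :
    Tendsto u atTop (𝓝 x) ↔
      Tendsto (fun n => ((u n : SL2) : Matrix (Fin 2) (Fin 2) ℝ)) atTop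
        (𝓝 (x : Matrix (Fin 2) (Fin 2) ℝ)) := by
  rw [nhds_induced, tendsto_comap_iff]
  rfl

lemma mem_nplus_iff (x : GG) :
    x ∈ Nplus ↔ ((x.1 : Matrix (Fin 2) (Fin 2) ℝ) 0 0 = 1 ∧
      (x.1 : Matrix (Fin 2) (Fin 2) ℝ) 1 0 = 0 ∧
      (x.1 : Matrix (Fin 2) (Fin 2) ℝ) 1 1 = 1) ∧ x.2 = 0 := by
  constructor
  · rintro ⟨s, hmat, hv⟩
    refine ⟨⟨?_, ?_, ?_⟩, hv⟩ <;> rw [hmat] <;> norm_num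
  · rintro ⟨⟨h00, h10, h11⟩, hv⟩
    refine ⟨(x.1 : Matrix (Fin 2) (Fin 2) ℝ) 0 1, ?_, hv⟩
    conv_lhs => rw [Matrix.eta_fin_two ((x.1 : SL2) : Matrix (Fin 2) (Fin 2) ℝ)]
    rw [h00, h10, h11]

/-- With `g_n = ((1,n;0,1), 0)`, the conjugates `g_n A g_n⁻¹` converge in the Chabauty sense to
the closed subgroup `N⁺`. -/
theorem stmt_17 :
    ChabautyTendsto (fun n => conjSet (upperUnipotent (n : ℝ), 0) Aset) Nplus ∧
      IsClosedSubgroup Nplus := by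
  constructor
  · constructor
    · -- part (i): every element of N⁺ is a limit of conjugates
      rintro ⟨h1, h2⟩ ⟨s, hmat, hv⟩
      simp only at hmat hv
      subst hv
      set a : ℕ → ℝ := fun n => Real.exp (-Real.arsinh (s / (2 * n))) with ha_def
      have hapos : ∀ n, 0 < a n := fun n => Real.exp_pos _
      refine ⟨fun n => ((⟨!![a n, (n : ℝ) * ((a n)⁻¹ - a n); 0, (a n)⁻¹], by
          rw [Matrix.det_fin_two_of]; simp [(hapos n).ne']⟩ : SL2), 0), fun n => ?_, ?_⟩
      · exact (mem_conj_iff_s17 _ _).2 ⟨a n, hapos n, rfl, rfl⟩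
      · have h0 : Tendsto (fun n : ℕ => s / (2 * n)) atTop (𝓝 0) :=
          Tendsto.div_atTop tendsto_const_nhds
            (Tendsto.const_mul_atTop two_pos tendsto_natCast_atTop_atTop)
        have h1' : Tendsto (fun n : ℕ => -Real.arsinh (s / (2 * n))) atTop (𝓝 0) := by
          have := ((Real.continuous_arsinh.tendsto 0).comp h0).neg
          simpa [Function.comp] using this
        have ha1 : Tendsto a atTop (𝓝 1) := by
          have := (Real.continuous_exp.tendsto 0).comp h1'
          rw [Real.exp_zero] at this; exact this
        have hainv : Tendsto (fun n => (a n)⁻¹) atTop (𝓝 1) := by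
          simpa using ha1.inv₀ one_ne_zero
        have key : ∀ᶠ n : ℕ in atTop, (n : ℝ) * ((a n)⁻¹ - a n) = s := by
          filter_upwards [eventually_ge_atTop 1] with n hn
          have hn' : (n : ℝ) ≠ 0 := Nat.cast_ne_zero.2 (by omega)
          have hE : (a n)⁻¹ = Real.exp (Real.arsinh (s / (2 * n))) := by
            rw [ha_def]; simp [Real.exp_neg]
          have ha' : a n = Real.exp (-Real.arsinh (s / (2 * n))) := rfl
          have h2 := Real.sinh_arsinh (s / (2 * n))
          rw [Real.sinh_eq] at h2
          have h3 : Real.exp (Real.arsinh (s / (2 * n))) -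
              Real.exp (-Real.arsinh (s / (2 * n))) = 2 * (s / (2 * n)) := by linarith
          rw [hE, ha', h3]
          field_simp
        have e01 : Tendsto (fun n : ℕ => (n : ℝ) * ((a n)⁻¹ - a n)) atTop (𝓝 s) :=
          Tendsto.congr' (key.mono fun n h => h.symm) tendsto_const_nhds
        apply Tendsto.prodMk_nhds _ tendsto_const_nhds
        refine tendsto_coe_iff.2 ?_
        show Tendsto (fun n : ℕ =>
          (!![a n, (n : ℝ) * ((a n)⁻¹ - a n); 0, (a n)⁻¹] : Matrix (Fin 2) (Fin 2) ℝ))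
          atTop (𝓝 (h1 : Matrix (Fin 2) (Fin 2) ℝ))
        rw [hmat]; refine tendsto_pi_nhds.2 ?_
        intro i
        rw [tendsto_pi_nhds]
        intro j
        fin_cases i <;> fin_cases j <;> simp only [Matrix.cons_val', Matrix.cons_val_zero,
          Matrix.cons_val_one, Matrix.head_cons, Matrix.head_fin_const, Matrix.empty_val',
          Matrix.cons_val_fin_one, Matrix.of_apply, Fin.isValue]
        · exact ha1
        · exact e01
        · exact tendsto_const_nhds
        · exact hainv
    · -- part (ii): limits of subsequences lie in N⁺
      rintro k hk u hu x hx
      choose a hapos hmat hv using fun n => (mem_conj_iff_s17 _ _).1 (hu n)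
      set X : Matrix (Fin 2) (Fin 2) ℝ := (x.1 : Matrix (Fin 2) (Fin 2) ℝ) with hX
      have hx1 : Tendsto (fun n => (u n).1) atTop (𝓝 x.1) :=
        (continuous_fst.tendsto x).comp hx
      have hx2 : Tendsto (fun n => (u n).2) atTop (𝓝 x.2) :=
        (continuous_snd.tendsto x).comp hx
      rw [tendsto_coe_iff] at hx1
      have hx1' : Tendsto (fun n =>
          (!![a n, (k n : ℝ) * ((a n)⁻¹ - a n); 0, (a n)⁻¹] : Matrix (Fin 2) (Fin 2) ℝ))
          atTop (𝓝 X) := hx1.congr fun n => hmat n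
      have e : ∀ i j : Fin 2, Tendsto
          (fun n => (!![a n, (k n : ℝ) * ((a n)⁻¹ - a n); 0, (a n)⁻¹]
            : Matrix (Fin 2) (Fin 2) ℝ) i j) atTop (𝓝 (X i j)) :=
        fun i j => tendsto_pi_nhds.1 (tendsto_pi_nhds.1 hx1' i) j
      have e00 : Tendsto a atTop (𝓝 (X 0 0)) := by simpa using e 0 0
      have e01 : Tendsto (fun n => (k n : ℝ) * ((a n)⁻¹ - a n)) atTop (𝓝 (X 0 1)) := by
        simpa using e 0 1
      have e10 : Tendsto (fun _ : ℕ => (0 : ℝ)) atTop (𝓝 (X 1 0)) := by simpa using e 1 0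
      have e11 : Tendsto (fun n => (a n)⁻¹) atTop (𝓝 (X 1 1)) := by simpa using e 1 1
      have kT : Tendsto (fun n => (k n : ℝ)) atTop atTop :=
        tendsto_natCast_atTop_atTop.comp hk.tendsto_atTop
      have hne : ∀ᶠ n in atTop, (k n : ℝ) ≠ 0 := by
        filter_upwards [kT.eventually_ge_atTop 1] with n hn
        linarith
      have diff0 : Tendsto (fun n => (a n)⁻¹ - a n) atTop (𝓝 0) := by
        apply (e01.div_atTop kT).congr'
        filter_upwards [hne] with n hn
        exact mul_div_cancel_left₀ _ hn
      have hXdiff : X 1 1 - X 0 0 = 0 := tendsto_nhds_unique (e11.sub e00) diff0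
      have hXprod : X 0 0 * X 1 1 = 1 := by
        refine tendsto_nhds_unique (e00.mul e11) ?_
        have : ∀ n, a n * (a n)⁻¹ = 1 := fun n => mul_inv_cancel₀ (hapos n).ne'
        exact Tendsto.congr (fun n => (this n).symm) tendsto_const_nhds
      have hXnn : 0 ≤ X 0 0 := ge_of_tendsto' e00 fun n => (hapos n).le
      have h00 : X 0 0 = 1 := by
        have h11 : X 1 1 = X 0 0 := by linarith
        rw [h11] at hXprod
        have hfac : (X 0 0 - 1) * (X 0 0 + 1) = 0 := by linear_combination hXprod
        rcases mul_eq_zero.1 hfac with h | h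
        · linarith
        · linarith
      have h11 : X 1 1 = 1 := by linarith
      have h10 : X 1 0 = 0 := tendsto_nhds_unique e10 tendsto_const_nhds |>.symm ▸ rfl
      have h10' : X 1 0 = 0 := (tendsto_nhds_unique tendsto_const_nhds e10).symm
      have hx2' : x.2 = 0 := by
        refine tendsto_nhds_unique hx2 ?_
        exact Tendsto.congr (fun n => (hv n).symm) tendsto_const_nhds
      exact (mem_nplus_iff x).2 ⟨⟨h00, h10', h11⟩, hx2'⟩
  · -- N⁺ is a closed subgroup
    refine ⟨?_, ⟨0, ?_, rfl⟩, ?_, ?_⟩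
    · have hset : Nplus = ((fun x : GG => (x.1 : Matrix (Fin 2) (Fin 2) ℝ) 0 0) ⁻¹' {1}) ∩
          ((fun x : GG => (x.1 : Matrix (Fin 2) (Fin 2) ℝ) 1 0) ⁻¹' {0}) ∩
          ((fun x : GG => (x.1 : Matrix (Fin 2) (Fin 2) ℝ) 1 1) ⁻¹' {1}) ∩
          (Prod.snd ⁻¹' {0}) := by
        ext x
        rw [mem_nplus_iff]
        simp [and_assoc]
      rw [hset]
      have hc : Continuous (fun x : GG => ((x.1 : SL2) : Matrix (Fin 2) (Fin 2) ℝ)) :=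
        continuous_induced_dom.comp continuous_fst
      have hij : ∀ i j : Fin 2,
          Continuous (fun x : GG => ((x.1 : SL2) : Matrix (Fin 2) (Fin 2) ℝ) i j) :=
        fun i j => (continuous_apply j).comp ((continuous_apply i).comp hc)
      exact (((isClosed_singleton.preimage (hij 0 0)).inter
        (isClosed_singleton.preimage (hij 1 0))).inter
        (isClosed_singleton.preimage (hij 1 1))).inter
        (isClosed_singleton.preimage continuous_snd)
    · show ((1 : SL2) : Matrix (Fin 2) (Fin 2) ℝ) = _
      rw [Matrix.SpecialLinearGroup.coe_one, Matrix.one_fin_two]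
    · rintro ⟨a1, a2⟩ ⟨s, hs, hv⟩ ⟨b1, b2⟩ ⟨t, ht, hw⟩
      simp only at hs hv ht hw
      subst hv; subst hw
      refine ⟨s + t, ?_, ?_⟩
      · show ((a1 * b1 : SL2) : Matrix (Fin 2) (Fin 2) ℝ) = _
        rw [Matrix.SpecialLinearGroup.coe_mul, hs, ht, Matrix.mul_fin_two]
        norm_num
        rw [add_comm]
      · show (0 : Fin 2 → ℝ) + _ = 0
        simp [Matrix.mulVec_zero]
    · rintro ⟨a1, a2⟩ ⟨s, hs, hv⟩
      simp only at hs hv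
      subst hv
      refine ⟨-s, ?_, ?_⟩
      · show ((a1⁻¹ : SL2) : Matrix (Fin 2) (Fin 2) ℝ) = _
        rw [Matrix.SpecialLinearGroup.coe_inv, hs, Matrix.adjugate_fin_two_of]
        norm_num
      · show -_ = 0
        simp [Matrix.mulVec_zero]

end
end

section
/- Let N⁺ = {((1, s; 0, 1), 0) : s ∈ ℝ} ⊆ G and set x_n = (I, (0, n)) ∈ G for n ∈ ℕ. Then the conjugates x_n N⁺ x_n⁻¹ converge in the Chabauty sense to the closed subgroup V₀ = {(I, (t, 0)) : t ∈ ℝ}. -/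
open Filter Topology

noncomputable section

set_option linter.unnecessarySeqFocus false

lemma coe_uu (s : ℝ) :
    ((upperUnipotent s : SL2) : Matrix (Fin 2) (Fin 2) ℝ) = !![1, s; 0, 1] := rfl

lemma conj_eq_s18 (n : ℕ) : conjSet ((1 : SL2), ![0, (n : ℝ)]) Nplus
    = {x : GG | ∃ s : ℝ, x = (upperUnipotent s, ![-(s * n), 0])} := by
  ext x
  constructor
  · rintro ⟨h, ⟨s, hs1, hs2⟩, rfl⟩
    refine ⟨s, ?_⟩
    have h1 : h.1 = upperUnipotent s := Subtype.ext hs1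
    simp only [gmul, ginv, h1, hs2, one_mul, mul_one, inv_one]
    refine Prod.ext rfl ?_
    simp only [Matrix.SpecialLinearGroup.coe_one, Matrix.mulVec_zero, add_zero, coe_uu,
      Matrix.one_mulVec]
    funext i
    fin_cases i <;>
      simp [Matrix.mulVec, dotProduct, Fin.sum_univ_two] <;> ring
  · rintro ⟨s, rfl⟩
    refine ⟨(upperUnipotent s, 0), ⟨s, rfl, rfl⟩, ?_⟩
    simp only [gmul, ginv, one_mul, mul_one, inv_one]
    refine Prod.ext rfl ?_
    simp only [Matrix.SpecialLinearGroup.coe_one, Matrix.mulVec_zero, add_zero, coe_uu,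
      Matrix.one_mulVec]
    funext i
    fin_cases i <;>
      simp [Matrix.mulVec, dotProduct, Fin.sum_univ_two] <;> ring

lemma tendsto_SL2 {f : ℕ → SL2} {x : SL2} :
    Tendsto f atTop (𝓝 x) ↔
      Tendsto (fun n => ((f n : SL2) : Matrix (Fin 2) (Fin 2) ℝ)) atTop
        (𝓝 (x : Matrix (Fin 2) (Fin 2) ℝ)) := by
  exact (Topology.IsInducing.induced ((↑) : SL2 → Matrix (Fin 2) (Fin 2) ℝ)).tendsto_nhds_iff

lemma tendsto_uu {f : ℕ → ℝ} {t : ℝ} (hf : Tendsto f atTop (𝓝 t)) :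
    Tendsto (fun n => (!![1, f n; 0, 1] : Matrix (Fin 2) (Fin 2) ℝ)) atTop
      (𝓝 !![1, t; 0, 1]) := by
  have : Continuous fun s : ℝ => (!![1, s; 0, 1] : Matrix (Fin 2) (Fin 2) ℝ) := by
    apply continuous_matrix
    intro i j
    fin_cases i <;> fin_cases j <;> simp <;> fun_prop
  exact (this.tendsto t).comp hf

lemma entry_tendsto {f : ℕ → Matrix (Fin 2) (Fin 2) ℝ} {A : Matrix (Fin 2) (Fin 2) ℝ}
    (hf : Tendsto f atTop (𝓝 A)) (i j : Fin 2) :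
    Tendsto (fun n => f n i j) atTop (𝓝 (A i j)) :=
  ((continuous_apply_apply i j).tendsto A).comp hf

lemma V0_eq : V0 = {x : GG | (x.1 : Matrix (Fin 2) (Fin 2) ℝ) = 1 ∧ x.2 1 = 0} := by
  ext x
  constructor
  · rintro ⟨t, h1, h2⟩
    refine ⟨by rw [h1, Matrix.SpecialLinearGroup.coe_one], by rw [h2]; simp⟩
  · rintro ⟨h1, h2⟩
    refine ⟨x.2 0, Subtype.ext (by rw [h1, Matrix.SpecialLinearGroup.coe_one]), ?_⟩
    funext i
    fin_cases i <;> simp [h2]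

/-- With `x_n = (I,(0,n))`, the conjugates `x_n N⁺ x_n⁻¹` converge in the Chabauty sense to
the closed subgroup `V₀`. -/
theorem stmt_18 :
    ChabautyTendsto (fun n => conjSet ((1 : SL2), ![0, (n : ℝ)]) Nplus) V0 ∧
      IsClosedSubgroup V0 := by
  constructor
  · constructor
    · -- (i)
      rintro h ⟨t, h1, h2⟩
      set s : ℕ → ℝ := fun n => -t / n with hs
      refine ⟨fun n => (upperUnipotent (s n), ![-(s n * n), 0]),
        fun n => by rw [show (fun n => conjSet ((1 : SL2), ![0, (n : ℝ)]) Nplus) n = _ from conj_eq_s18 n]; exact ⟨s n, rfl⟩, ?_⟩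
      have hx : h = ((1 : SL2), ![t, 0]) := Prod.ext h1 h2
      rw [hx, nhds_prod_eq]
      apply Tendsto.prodMk
      · rw [tendsto_SL2]
        have hs0 : Tendsto s atTop (𝓝 0) := tendsto_const_div_atTop_nhds_zero_nat (-t)
        have := tendsto_uu hs0
        simpa [coe_uu, Matrix.SpecialLinearGroup.coe_one, Matrix.one_fin_two] using this
      · rw [tendsto_pi_nhds]
        intro i
        fin_cases i
        · show Tendsto (fun n => -(s n * n)) atTop (𝓝 t)
          apply Tendsto.congr' _ tendsto_const_nhds
          filter_upwards [eventually_ge_atTop 1] with n hn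
          have hn0 : (n : ℝ) ≠ 0 := Nat.cast_ne_zero.2 (by omega)
          simp only [hs]
          field_simp
        · show Tendsto (fun _ : ℕ => (0 : ℝ)) atTop (𝓝 0)
          exact tendsto_const_nhds
    · -- (ii)
      intro k hk u hu x hx
      have hu' : ∀ n, ∃ s : ℝ, u n = (upperUnipotent s, ![-(s * k n), 0]) := fun n => by
        have h := hu n
        rw [show (fun n => conjSet ((1 : SL2), ![0, (n : ℝ)]) Nplus) (k n) = _ from conj_eq_s18 (k n)] at h
        exact h
      choose s hs using hu'
      have hfst : Tendsto (fun n => (u n).1) atTop (𝓝 x.1) :=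
        (continuous_fst.tendsto x).comp hx
      have hsnd : Tendsto (fun n => (u n).2) atTop (𝓝 x.2) :=
        (continuous_snd.tendsto x).comp hx
      have ha : Tendsto (fun n => -(s n * k n)) atTop (𝓝 (x.2 0)) := by
        have := (tendsto_pi_nhds.1 hsnd) 0
        apply this.congr
        intro n; rw [hs n]; simp
      have hb : x.2 1 = 0 := by
        have h1 := (tendsto_pi_nhds.1 hsnd) 1
        have h2 : Tendsto (fun n => (u n).2 1) atTop (𝓝 0) := by
          apply tendsto_const_nhds.congr
          intro n; rw [hs n]; simp
        exact (tendsto_nhds_unique h2 h1).symm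
      have hkR : Tendsto (fun n => ((k n : ℝ))) atTop atTop :=
        tendsto_natCast_atTop_atTop.comp hk.tendsto_atTop
      have hs0 : Tendsto s atTop (𝓝 0) := by
        have hdiv : Tendsto (fun n => (-(-(s n * k n))) / (k n : ℝ)) atTop (𝓝 0) :=
          Tendsto.div_atTop (ha.neg) hkR
        apply hdiv.congr'
        filter_upwards [hkR.eventually_gt_atTop 0] with n hn
        have : (k n : ℝ) ≠ 0 := ne_of_gt hn
        field_simp
      have hmat : Tendsto (fun n => ((u n).1 : Matrix (Fin 2) (Fin 2) ℝ)) atTop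
          (𝓝 (x.1 : Matrix (Fin 2) (Fin 2) ℝ)) := tendsto_SL2.1 hfst
      have hmat' : Tendsto (fun n => (!![1, s n; 0, 1] : Matrix (Fin 2) (Fin 2) ℝ)) atTop
          (𝓝 (x.1 : Matrix (Fin 2) (Fin 2) ℝ)) := by
        apply hmat.congr
        intro n; rw [hs n]; rfl
      have hx1 : (x.1 : Matrix (Fin 2) (Fin 2) ℝ) = !![1, (0:ℝ); 0, 1] :=
        tendsto_nhds_unique hmat' (tendsto_uu hs0)
      rw [V0_eq]
      refine ⟨?_, hb⟩
      rw [hx1, Matrix.one_fin_two]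
  · -- IsClosedSubgroup V0
    refine ⟨?_, ⟨0, rfl, by show (0 : Fin 2 → ℝ) = ![0,0]; funext i; fin_cases i <;> simp⟩, ?_, ?_⟩
    · rw [V0_eq]
      have : {x : GG | (x.1 : Matrix (Fin 2) (Fin 2) ℝ) = 1 ∧ x.2 1 = 0} =
          ((fun x : GG => ((x.1 : Matrix (Fin 2) (Fin 2) ℝ), x.2 1)) ⁻¹'
            {((1 : Matrix (Fin 2) (Fin 2) ℝ), (0 : ℝ))}) := by
        ext x; simp [Prod.ext_iff]
      rw [this]
      exact isClosed_singleton.preimage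
        ((continuous_induced_dom.comp continuous_fst).prodMk
          ((continuous_apply 1).comp continuous_snd))
    · rintro a ⟨t, ha1, ha2⟩ b ⟨t', hb1, hb2⟩
      refine ⟨t + t', by simp [gmul, ha1, hb1], ?_⟩
      show a.2 + (a.1 : Matrix (Fin 2) (Fin 2) ℝ).mulVec b.2 = ![t + t', 0]
      rw [ha1, ha2, hb2, Matrix.SpecialLinearGroup.coe_one, Matrix.one_mulVec]
      funext i; fin_cases i <;> simp
    · rintro a ⟨t, ha1, ha2⟩
      refine ⟨-t, by simp [ginv, ha1], ?_⟩
      show -((a.1⁻¹ : SL2) : Matrix (Fin 2) (Fin 2) ℝ).mulVec a.2 = ![-t, 0]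
      rw [ha1, ha2, inv_one, Matrix.SpecialLinearGroup.coe_one, Matrix.one_mulVec]
      funext i; fin_cases i <;> simp

end
end
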